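/- arXiv:1801.04542 — 2 statements merged into one kernel-verified Lean document; each statement's English description precedes it below -/
import Mathlib

section
/- (Kronecker) Let α be an algebraic integer, all of whose conjugates (roots of its minimal polynomial over ℚ) have complex absolute value equal to 1. Then α is a root of unity. -/
open IntermediateField in
theorem kronecker_theorem (α : ℂ) (hint : IsIntegral ℤ α)
    (h : ∀ β : ℂ, Polynomial.aeval β (minpoly ℚ α) = 0 → ‖β‖ = 1) :
    ∃ n : ℕ, 0 < n ∧ α ^ n = 1 := by
  have halg : IsIntegral ℚ α := hint.tower_top
  let K : IntermediateField ℚ ℂ := ℚ⟮α⟯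
  haveI : FiniteDimensional ℚ K := IntermediateField.adjoin.finiteDimensional halg
  haveI : NumberField K := ⟨⟩
  set x : K := IntermediateField.AdjoinSimple.gen ℚ α with hx
  have hxint : IsIntegral ℤ x := by
    have := hint
    rw [show α = algebraMap K ℂ x from rfl] at this
    exact IsIntegral.tower_bot_of_field this
  have hmin : minpoly ℚ x = minpoly ℚ α :=
    (minpoly.algebraMap_eq (algebraMap K ℂ).injective x).symm
  obtain ⟨n, hn, hxn⟩ := NumberField.Embeddings.pow_eq_one_of_norm_eq_one K ℂ hxint
    (fun φ => by
      have h0 : Polynomial.aeval (φ x) (minpoly ℚ α) = 0 := by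
        rw [← hmin]
        exact (Polynomial.aeval_algHom_apply φ.toRatAlgHom x (minpoly ℚ x)).trans
          (by rw [minpoly.aeval, map_zero])
      simpa using h (φ x) h0)
  refine ⟨n, hn, ?_⟩
  have : (algebraMap K ℂ) (x ^ n) = algebraMap K ℂ 1 := by rw [hxn]
  simpa [hx, IntermediateField.AdjoinSimple.coe_gen] using this
end

section
/- (Kummer) Let p be an odd prime and ζ a primitive p-th root of unity. Then every unit u of ℤ[ζ] can be written as u = ζᵃ · v, where a is an integer and v is a real unit (i.e. v is fixed by complex conjugation ζ ↦ ζ⁻¹). -/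
open Complex Polynomial IntermediateField Module

namespace KummerAux

variable {p : ℕ} {ζ : ℂ}

lemma abs_zeta (hp : 0 < p) (hζ : IsPrimitiveRoot ζ p) : ‖ζ‖ = 1 := by
  exact Complex.norm_eq_one_of_pow_eq_one hζ.pow_eq_one hp.ne'

lemma conj_zeta (hp : 0 < p) (hζ : IsPrimitiveRoot ζ p) : (starRingEnd ℂ) ζ = ζ⁻¹ :=
  (Complex.inv_eq_conj (abs_zeta hp hζ)).symm

lemma zeta_ne_zero (hp : 0 < p) (hζ : IsPrimitiveRoot ζ p) : ζ ≠ 0 := by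
  intro h
  have := abs_zeta hp hζ
  rw [h] at this; simp at this

lemma conj_zeta_mem (hp : 0 < p) (hζ : IsPrimitiveRoot ζ p) :
    (starRingEnd ℂ) ζ ∈ Algebra.adjoin ℤ ({ζ} : Set ℂ) := by
  have h : (starRingEnd ℂ) ζ = ζ ^ (p - 1) := by
    rw [conj_zeta hp hζ, eq_comm]
    refine eq_inv_of_mul_eq_one_left ?_
    rw [← pow_succ, Nat.sub_add_cancel hp, hζ.pow_eq_one]
  rw [h]
  exact pow_mem (Algebra.self_mem_adjoin_singleton ℤ ζ) _

lemma conj_mem (hp : 0 < p) (hζ : IsPrimitiveRoot ζ p) {x : ℂ}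
    (hx : x ∈ Algebra.adjoin ℤ ({ζ} : Set ℂ)) :
    (starRingEnd ℂ) x ∈ Algebra.adjoin ℤ ({ζ} : Set ℂ) := by
  induction hx using Algebra.adjoin_induction with
  | mem y hy =>
    rw [Set.mem_singleton_iff] at hy; subst hy
    exact conj_zeta_mem hp hζ
  | algebraMap r => simpa using Subalgebra.algebraMap_mem _ r
  | add x y hx hy ihx ihy => rw [map_add]; exact add_mem ihx ihy
  | mul x y hx hy ihx ihy => rw [map_mul]; exact mul_mem ihx ihy


variable {p : ℕ} {ζ : ℂ}

lemma conj_zeta_pow (hp : 0 < p) (hζ : IsPrimitiveRoot ζ p) :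
    (starRingEnd ℂ) ζ = ζ ^ (p - 1) := by
  have habs : ‖ζ‖ = 1 := Complex.norm_eq_one_of_pow_eq_one hζ.pow_eq_one hp.ne'
  rw [← Complex.inv_eq_conj habs, eq_comm]
  refine eq_inv_of_mul_eq_one_left ?_
  rw [← pow_succ, Nat.sub_add_cancel hp, hζ.pow_eq_one]

lemma one_sub_pow_dvd (ζ : ℂ) (k : ℕ) :
    ∃ y ∈ Algebra.adjoin ℤ ({ζ} : Set ℂ), 1 - ζ ^ k = (1 - ζ) * y := by
  refine ⟨∑ i ∈ Finset.range k, ζ ^ i, ?_, ?_⟩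
  · exact sum_mem fun i _ => pow_mem (Algebra.self_mem_adjoin_singleton ℤ ζ) _
  · have := geom_sum_mul ζ k
    linear_combination this

lemma sub_conj_dvd (hp : 2 ≤ p) (hζ : IsPrimitiveRoot ζ p) {x : ℂ}
    (hx : x ∈ Algebra.adjoin ℤ ({ζ} : Set ℂ)) :
    ∃ y ∈ Algebra.adjoin ℤ ({ζ} : Set ℂ), x - (starRingEnd ℂ) x = (1 - ζ) * y := by
  have hp0 : 0 < p := by omega
  induction hx using Algebra.adjoin_induction with
  | mem z hz =>
    rw [Set.mem_singleton_iff] at hz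
    rw [hz]
    obtain ⟨y₀, hy₀, hEq⟩ := one_sub_pow_dvd ζ (p - 2)
    refine ⟨ζ * y₀, mul_mem (Algebra.self_mem_adjoin_singleton ℤ ζ) hy₀, ?_⟩
    rw [conj_zeta_pow hp0 hζ]
    have hpow : ζ ^ (p - 1) = ζ * ζ ^ (p - 2) := by
      rw [← pow_succ']
      congr 1
      omega
    rw [hpow]
    linear_combination ζ * hEq
  | algebraMap r =>
    refine ⟨0, zero_mem _, ?_⟩
    simp
  | add a b ha hb iha ihb =>
    obtain ⟨y₁, hy₁, h₁⟩ := iha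
    obtain ⟨y₂, hy₂, h₂⟩ := ihb
    exact ⟨y₁ + y₂, add_mem hy₁ hy₂, by rw [map_add]; linear_combination h₁ + h₂⟩
  | mul a b ha hb iha ihb =>
    obtain ⟨y₁, hy₁, h₁⟩ := iha
    obtain ⟨y₂, hy₂, h₂⟩ := ihb
    have hcb : (starRingEnd ℂ) b ∈ Algebra.adjoin ℤ ({ζ} : Set ℂ) := conj_mem hp0 hζ hb
    refine ⟨a * y₂ + (starRingEnd ℂ) b * y₁, add_mem (mul_mem ha hy₂) (mul_mem hcb hy₁), ?_⟩
    rw [map_mul]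
    linear_combination a * h₂ + (starRingEnd ℂ) b * h₁


variable {p : ℕ} {ζ : ℂ}

lemma exists_hom (hp : p.Prime) (hζ : IsPrimitiveRoot ζ p) :
    ∃ φ : Algebra.adjoin ℤ ({ζ} : Set ℂ) →+* ZMod p,
      φ ⟨ζ, Algebra.self_mem_adjoin_singleton ℤ ζ⟩ = 1 := by
  haveI : Fact p.Prime := ⟨hp⟩
  have hint : IsIntegral ℤ ζ := hζ.isIntegral hp.pos
  have heval : Polynomial.eval₂ (Int.castRingHom (ZMod p)) 1 (minpoly ℤ ζ) = 0 := by
    rw [← Polynomial.cyclotomic_eq_minpoly hζ hp.pos, eval₂_eq_eval_map, map_cyclotomic,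
      Polynomial.eval_one_cyclotomic_prime, ZMod.natCast_self]
  refine ⟨(AdjoinRoot.lift (Int.castRingHom (ZMod p)) 1 heval).comp
    (minpoly.equivAdjoin hint).symm.toAlgHom.toRingHom, ?_⟩
  have h1 : (minpoly.equivAdjoin hint).symm ⟨ζ, Algebra.self_mem_adjoin_singleton ℤ ζ⟩
      = AdjoinRoot.root (minpoly ℤ ζ) := by
    rw [AlgEquiv.symm_apply_eq]
    simp [minpoly.equivAdjoin, AdjoinRoot.Minpoly.toAdjoin]
  have h2 : ((minpoly.equivAdjoin hint).symm.toAlgHom.toRingHom)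
      ⟨ζ, Algebra.self_mem_adjoin_singleton ℤ ζ⟩ = AdjoinRoot.root (minpoly ℤ ζ) := h1
  rw [RingHom.comp_apply, h2, AdjoinRoot.lift_root]


variable {p : ℕ} {ζ : ℂ}

lemma conj_zeta_pow' (hp : 0 < p) (hζ : IsPrimitiveRoot ζ p) :
    (starRingEnd ℂ) ζ = ζ ^ (p - 1) := by
  have habs : ‖ζ‖ = 1 := Complex.norm_eq_one_of_pow_eq_one hζ.pow_eq_one hp.ne'
  rw [← Complex.inv_eq_conj habs, eq_comm]
  refine eq_inv_of_mul_eq_one_left ?_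
  rw [← pow_succ, Nat.sub_add_cancel hp, hζ.pow_eq_one]

lemma conj_memK (hp : 0 < p) (hζ : IsPrimitiveRoot ζ p) {x : ℂ} (hx : x ∈ ℚ⟮ζ⟯) :
    (starRingEnd ℂ) x ∈ ℚ⟮ζ⟯ := by
  induction hx using IntermediateField.adjoin_induction with
  | mem z hz =>
    rw [Set.mem_singleton_iff] at hz
    rw [hz, conj_zeta_pow' hp hζ]
    exact pow_mem (IntermediateField.mem_adjoin_simple_self ℚ ζ) _
  | algebraMap r => simpa using IntermediateField.algebraMap_mem _ r
  | add x y hx hy ihx ihy => rw [map_add]; exact add_mem ihx ihy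
  | inv x hx ihx => rw [map_inv₀]; exact inv_mem ihx
  | mul x y hx hy ihx ihy => rw [map_mul]; exact mul_mem ihx ihy

/-- Kronecker: an integral element of `ℚ(ζ)` with `x ⬝ conj x = 1` is a root of unity. -/
lemma root_of_unity_of_unit (hp : p.Prime) (hζ : IsPrimitiveRoot ζ p) {x : ℂ}
    (hx : x ∈ Algebra.adjoin ℤ ({ζ} : Set ℂ)) (hx1 : x * (starRingEnd ℂ) x = 1) :
    ∃ n : ℕ, 0 < n ∧ x ^ n = 1 := by
  have hint : IsIntegral ℤ ζ := hζ.isIntegral hp.pos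
  have hintQ : IsIntegral ℚ ζ := hint.tower_top
  haveI : FiniteDimensional ℚ ℚ⟮ζ⟯ := IntermediateField.adjoin.finiteDimensional hintQ
  haveI : NumberField ℚ⟮ζ⟯ := ⟨⟩
  -- membership transfers
  have hRK : ∀ z : ℂ, z ∈ Algebra.adjoin ℤ ({ζ} : Set ℂ) → z ∈ ℚ⟮ζ⟯ := by
    intro z hz
    have hle : Algebra.adjoin ℤ ({ζ} : Set ℂ) ≤
        Subalgebra.restrictScalars ℤ (ℚ⟮ζ⟯).toSubalgebra := by
      rw [Algebra.adjoin_le_iff]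
      intro w hw
      rw [Set.mem_singleton_iff] at hw
      rw [hw]
      exact IntermediateField.mem_adjoin_simple_self ℚ ζ
    exact hle hz
  have hxK : x ∈ ℚ⟮ζ⟯ := hRK x hx
  set K := ℚ⟮ζ⟯
  set xK : K := ⟨x, hxK⟩ with hxKdef
  -- conjugation as a ring hom on K
  have hconjK : ∀ z : K, (starRingEnd ℂ) (z : ℂ) ∈ K := fun z => conj_memK hp.pos hζ z.2
  let c : K →+* K :=
    { toFun := fun z => ⟨(starRingEnd ℂ) (z : ℂ), hconjK z⟩
      map_one' := by ext; simp
      map_mul' := fun a b => by ext; simp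
      map_zero' := by ext; simp
      map_add' := fun a b => by ext; simp }
  have hcval : ∀ z : K, ((c z : K) : ℂ) = (starRingEnd ℂ) (z : ℂ) := fun z => rfl
  -- integrality of x
  have hxi : IsIntegral ℤ xK := by
    have h1 : IsIntegral ℤ x :=
      IsIntegral.of_mem_of_fg _ (IsIntegral.fg_adjoin_singleton hint) _ hx
    have hval : (((K.val).restrictScalars ℤ) xK : ℂ) = x := rfl
    rw [← isIntegral_algHom_iff ((K.val).restrictScalars ℤ) (Subtype.val_injective)]
    exact h1
  -- norms of conjugates
  have hnorm : ∀ φ : K →+* ℂ, ‖φ xK‖ = 1 := by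
    intro φ
    have hcomm : (starRingEnd ℂ).comp φ = φ.comp c := by
      have h1 : ((starRingEnd ℂ).comp φ).toRatAlgHom = (φ.comp c).toRatAlgHom := by
        apply IntermediateField.adjoin_algHom_ext
        intro z hz
        rw [Set.mem_singleton_iff] at hz
        have hζ' : IsPrimitiveRoot z p := hz ▸ hζ
        have hzK : z ∈ K := by rw [hz]; exact IntermediateField.mem_adjoin_simple_self ℚ ζ
        show (starRingEnd ℂ) (φ ⟨z, hzK⟩) = φ (c ⟨z, hzK⟩)
        have hw : (φ ⟨z, hzK⟩) ^ p = 1 := by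
          rw [← map_pow]
          have hzp : (⟨z, hzK⟩ : K) ^ p = 1 := by
            ext
            push_cast
            exact hζ'.pow_eq_one
          rw [hzp, map_one]
        have habsw : ‖φ ⟨z, hzK⟩‖ = 1 := Complex.norm_eq_one_of_pow_eq_one hw hp.pos.ne'
        rw [← Complex.inv_eq_conj habsw]
        have hc : c ⟨z, hzK⟩ = (⟨z, hzK⟩ : K) ^ (p - 1) := by
          ext
          rw [hcval]
          push_cast
          exact conj_zeta_pow' hp.pos hζ'
        rw [hc, map_pow]
        refine eq_comm.mp (eq_inv_of_mul_eq_one_left ?_)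
        rw [← pow_succ, Nat.sub_add_cancel hp.pos, hw]
      have := congrArg AlgHom.toRingHom h1
      simpa using this
    have hmul : φ xK * (starRingEnd ℂ) (φ xK) = 1 := by
      have h2 : (starRingEnd ℂ) (φ xK) = φ (c xK) := by
        have := congrArg (fun f => f xK) (congrArg DFunLike.coe hcomm)
        simpa using this
      rw [h2, ← map_mul]
      have h3 : xK * c xK = 1 := by
        ext
        push_cast [hcval]
        exact hx1
      rw [h3, map_one]
    have := Complex.mul_conj (φ xK)
    rw [hmul] at this
    have hsq : Complex.normSq (φ xK) = 1 := by
      have := congrArg Complex.re this.symm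
      simpa using this
    have : ‖φ xK‖ ^ 2 = 1 := by
      rw [Complex.sq_norm]
      exact hsq
    nlinarith [norm_nonneg (φ xK)]
  obtain ⟨n, hn, hxn⟩ := NumberField.Embeddings.pow_eq_one_of_norm_eq_one K ℂ hxi hnorm
  refine ⟨n, hn, ?_⟩
  have := congrArg (fun z : K => (z : ℂ)) hxn
  push_cast at this
  exact this


variable {p : ℕ} {ζ : ℂ}

lemma nat_dvd_two_p (hp : p.Prime) {l : ℕ} (hl : 0 < l) (hdvd : p ∣ l)
    (hle : l.totient ≤ p - 1) : l ∣ 2 * p := by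
  have hpsq : ¬ (p * p ∣ l) := by
    intro hc
    have h2 := Nat.totient_dvd_of_dvd hc
    rw [← Nat.pow_two, Nat.totient_prime_pow hp (by norm_num)] at h2
    have hpos : 0 < l.totient := Nat.totient_pos.2 hl
    have hle2 := Nat.le_of_dvd hpos h2
    have h3 : p ^ (2 - 1) * (p - 1) ≤ p - 1 := le_trans hle2 hle
    norm_num at h3
    have hp2 := hp.two_le
    have h4 : 2 * (p - 1) ≤ p * (p - 1) := Nat.mul_le_mul_right _ hp2
    omega
  obtain ⟨t, rfl⟩ := hdvd
  have ht0 : 0 < t := Nat.pos_of_ne_zero (by rintro rfl; simp at hl)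
  have hpt : ¬ p ∣ t := fun hc => hpsq (Nat.mul_dvd_mul_left p hc)
  have hcop : p.Coprime t := (Nat.Prime.coprime_iff_not_dvd hp).2 hpt
  have htot : (p * t).totient = (p - 1) * t.totient := by
    rw [Nat.totient_mul hcop, Nat.totient_prime hp]
  rw [htot] at hle
  have htpos : 0 < t.totient := Nat.totient_pos.2 ht0
  have hp1 : 0 < p - 1 := by have := hp.two_le; omega
  have ht1 : t.totient = 1 := by nlinarith
  rcases Nat.totient_eq_one_iff.1 ht1 with rfl | rfl
  · exact Dvd.intro_left 2 (by ring)
  · exact dvd_of_eq (by ring)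

lemma pow_two_p_eq_one (hp : p.Prime) (hζ : IsPrimitiveRoot ζ p) {x : ℂ}
    (hxK : x ∈ ℚ⟮ζ⟯) {n : ℕ} (hn : 0 < n) (hxn : x ^ n = 1) : x ^ (2 * p) = 1 := by
  have hint : IsIntegral ℤ ζ := hζ.isIntegral hp.pos
  have hintQ : IsIntegral ℚ ζ := hint.tower_top
  haveI : FiniteDimensional ℚ ℚ⟮ζ⟯ := IntermediateField.adjoin.finiteDimensional hintQ
  set K := ℚ⟮ζ⟯
  have hfin : IsOfFinOrder x := isOfFinOrder_iff_pow_eq_one.2 ⟨n, hn, hxn⟩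
  have hm : orderOf x ≠ 0 := hfin.orderOf_pos.ne'
  have hop : orderOf ζ = p := hζ.eq_orderOf.symm
  have hcomm : Commute x ζ := mul_comm x ζ
  have hpne : orderOf ζ ≠ 0 := by rw [hop]; exact hp.pos.ne'
  have hg := hcomm.orderOf_mul_pow_eq_lcm hm hpne
  set g := x ^ (orderOf x / Nat.factorizationLCMLeft (orderOf x) (orderOf ζ)) *
      ζ ^ (orderOf ζ / Nat.factorizationLCMRight (orderOf x) (orderOf ζ)) with hgdef
  set l := Nat.lcm (orderOf x) (orderOf ζ) with hldef
  have hl0 : 0 < l := Nat.pos_of_ne_zero (Nat.lcm_ne_zero hm hpne)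
  have hprim : IsPrimitiveRoot g l := by
    rw [← hg]; exact IsPrimitiveRoot.orderOf g
  have hgK : g ∈ K := by
    have hζK : ζ ∈ K := IntermediateField.mem_adjoin_simple_self ℚ ζ
    exact mul_mem (pow_mem hxK _) (pow_mem hζK _)
  have hprimK : IsPrimitiveRoot (⟨g, hgK⟩ : K) l :=
    IsPrimitiveRoot.coe_submonoidClass_iff.mp hprim
  have hminp : cyclotomic l ℚ = minpoly ℚ (⟨g, hgK⟩ : K) :=
    cyclotomic_eq_minpoly_rat hprimK hl0
  have hfr : finrank ℚ K = p - 1 := by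
    rw [IntermediateField.adjoin.finrank hintQ, ← cyclotomic_eq_minpoly_rat hζ hp.pos,
      natDegree_cyclotomic, Nat.totient_prime hp]
  have htot : l.totient ≤ p - 1 := by
    have h1 : l.totient = (minpoly ℚ (⟨g, hgK⟩ : K)).natDegree := by
      rw [← hminp, natDegree_cyclotomic]
    rw [h1, ← hfr]
    exact minpoly.natDegree_le _
  have hpl : p ∣ l := by rw [hldef, ← hop]; exact Nat.dvd_lcm_right _ _
  have hl2p : l ∣ 2 * p := nat_dvd_two_p hp hl0 hpl htot
  have hml : orderOf x ∣ 2 * p := dvd_trans (Nat.dvd_lcm_left _ _) hl2p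
  exact orderOf_dvd_iff_pow_eq_one.1 hml


end KummerAux

set_option maxHeartbeats 1000000 in
set_option synthInstance.maxHeartbeats 400000 in
open KummerAux Complex Polynomial IntermediateField in
theorem kummer_unit_decomposition
    (p : ℕ) (hp : p.Prime) (hodd : Odd p) (ζ : ℂ) (hζ : IsPrimitiveRoot ζ p)
    (u : (Algebra.adjoin ℤ ({ζ} : Set ℂ))ˣ) :
    ∃ (a : ℤ) (v : (Algebra.adjoin ℤ ({ζ} : Set ℂ))ˣ),
      ((u : Algebra.adjoin ℤ ({ζ} : Set ℂ)) : ℂ) =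
        ζ ^ a * ((v : Algebra.adjoin ℤ ({ζ} : Set ℂ)) : ℂ) ∧
      (starRingEnd ℂ) ((v : Algebra.adjoin ℤ ({ζ} : Set ℂ)) : ℂ) =
        ((v : Algebra.adjoin ℤ ({ζ} : Set ℂ)) : ℂ) := by
  haveI : NeZero p := ⟨hp.pos.ne'⟩
  set cu : ℂ := ((u : Algebra.adjoin ℤ ({ζ} : Set ℂ)) : ℂ) with hcu
  set cuinv : ℂ := (((u⁻¹ : (Algebra.adjoin ℤ ({ζ} : Set ℂ))ˣ) : Algebra.adjoin ℤ ({ζ} : Set ℂ)) : ℂ) with hcuinv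
  have huv : cu * cuinv = 1 := by
    have h := congrArg (fun z : Algebra.adjoin ℤ ({ζ} : Set ℂ) => (z : ℂ)) u.mul_inv
    push_cast at h
    exact h
  have hcu_mem : cu ∈ Algebra.adjoin ℤ ({ζ} : Set ℂ) := (u : Algebra.adjoin ℤ ({ζ} : Set ℂ)).2
  have hcuinv_mem : cuinv ∈ Algebra.adjoin ℤ ({ζ} : Set ℂ) := ((u⁻¹ : (Algebra.adjoin ℤ ({ζ} : Set ℂ))ˣ) : Algebra.adjoin ℤ ({ζ} : Set ℂ)).2
  have hcu_ne : cu ≠ 0 := left_ne_zero_of_mul_eq_one huv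
  -- the root of unity α = u / conj u
  set α : ℂ := cu * (starRingEnd ℂ) cuinv with hαdef
  have hα_mem : α ∈ Algebra.adjoin ℤ ({ζ} : Set ℂ) := mul_mem hcu_mem (conj_mem hp.pos hζ hcuinv_mem)
  have hconj_uv : (starRingEnd ℂ) cu * (starRingEnd ℂ) cuinv = 1 := by
    rw [← map_mul, huv, map_one]
  have hα1 : α * (starRingEnd ℂ) α = 1 := by
    rw [hαdef, map_mul, Complex.conj_conj]
    calc cu * (starRingEnd ℂ) cuinv * ((starRingEnd ℂ) cu * cuinv)
        = (cu * cuinv) * ((starRingEnd ℂ) cu * (starRingEnd ℂ) cuinv) := by ring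
      _ = 1 := by rw [huv, hconj_uv, one_mul]
  have hkey : cu = α * (starRingEnd ℂ) cu := by
    rw [hαdef, mul_assoc, ← map_mul, mul_comm cuinv cu, huv, map_one, mul_one]
  -- α is a root of unity
  obtain ⟨n, hn, hαn⟩ := root_of_unity_of_unit hp hζ hα_mem hα1
  have hαK : α ∈ ℚ⟮ζ⟯ := by
    have hle : Algebra.adjoin ℤ ({ζ} : Set ℂ) ≤ Subalgebra.restrictScalars ℤ (ℚ⟮ζ⟯).toSubalgebra := by
      rw [Algebra.adjoin_le_iff]
      intro w hw
      rw [Set.mem_singleton_iff] at hw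
      rw [hw]
      exact IntermediateField.mem_adjoin_simple_self ℚ ζ
    exact hle hα_mem
  have hα2p : α ^ (2 * p) = 1 := pow_two_p_eq_one hp hζ hαK hn hαn
  have hε : α ^ p = 1 ∨ α ^ p = -1 := by
    have hsq : (α ^ p) * (α ^ p) = 1 := by
      rw [← pow_add]
      rw [show p + p = 2 * p by ring]
      exact hα2p
    exact mul_self_eq_one_iff.1 hsq
  rcases hε with hε1 | hεm1
  · -- good case : α = ζ ^ k
    obtain ⟨k, hk, hkα⟩ := hζ.eq_pow_of_pow_eq_one hε1
    obtain ⟨r, hr⟩ := hodd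
    set h : ℕ := r + 1 with hhdef
    have h2h : 2 * h = p + 1 := by omega
    -- the unit ζ as a unit of R
    have hzconj_mem : (starRingEnd ℂ) ζ ∈ Algebra.adjoin ℤ ({ζ} : Set ℂ) := conj_mem hp.pos hζ (Algebra.self_mem_adjoin_singleton ℤ ζ)
    have habs : ‖ζ‖ = 1 := Complex.norm_eq_one_of_pow_eq_one hζ.pow_eq_one hp.pos.ne'
    have hzmul : ζ * (starRingEnd ℂ) ζ = 1 := by
      rw [Complex.mul_conj]
      norm_cast
      rw [← Complex.sq_norm, habs, one_pow]
    set zR : Algebra.adjoin ℤ ({ζ} : Set ℂ) := ⟨ζ, Algebra.self_mem_adjoin_singleton ℤ ζ⟩ with hzRdef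
    set zC : Algebra.adjoin ℤ ({ζ} : Set ℂ) := ⟨(starRingEnd ℂ) ζ, hzconj_mem⟩ with hzCdef
    have hz1 : zR * zC = 1 := by ext; push_cast; exact hzmul
    have hz1' : zC * zR = 1 := by rw [mul_comm]; exact hz1
    set zu : (Algebra.adjoin ℤ ({ζ} : Set ℂ))ˣ := ⟨zR, zC, hz1, hz1'⟩ with hzudef
    refine ⟨(k * h : ℕ), (zu ^ (k * h))⁻¹ * u, ?_, ?_⟩
    · -- u = ζ ^ a * v
      have hv : ((((zu ^ (k * h))⁻¹ * u : (Algebra.adjoin ℤ ({ζ} : Set ℂ))ˣ) : Algebra.adjoin ℤ ({ζ} : Set ℂ)) : ℂ)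
          = ((starRingEnd ℂ) ζ) ^ (k * h) * cu := by
        rw [Units.val_mul, ← inv_pow, Units.val_pow_eq_pow_val]
        push_cast
        rfl
      rw [hv, zpow_natCast, ← mul_assoc, ← mul_pow, hzmul, one_pow, one_mul]
    · -- v is real
      have hv : ((((zu ^ (k * h))⁻¹ * u : (Algebra.adjoin ℤ ({ζ} : Set ℂ))ˣ) : Algebra.adjoin ℤ ({ζ} : Set ℂ)) : ℂ)
          = ((starRingEnd ℂ) ζ) ^ (k * h) * cu := by
        rw [Units.val_mul, ← inv_pow, Units.val_pow_eq_pow_val]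
        push_cast
        rfl
      rw [hv]
      have hconjcu : (starRingEnd ℂ) cu = ((starRingEnd ℂ) ζ) ^ k * cu := by
        have h1 : (starRingEnd ℂ) cu = (starRingEnd ℂ) α * cu := by
          conv_lhs => rw [hkey]
          rw [map_mul, Complex.conj_conj, mul_comm]
        rw [h1, ← hkα, ← map_pow]
      rw [map_mul, map_pow, Complex.conj_conj, hconjcu]
      -- goal : ζ ^ (k*h) * ((conj ζ)^k * cu) = (conj ζ)^(k*h) * cu
      have hpow : ζ ^ (k * h) * ((starRingEnd ℂ) ζ) ^ k = ((starRingEnd ℂ) ζ) ^ (k * h) := by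
        have hzne : ζ ≠ 0 := zeta_ne_zero hp.pos hζ
        have hcz : (starRingEnd ℂ) ζ = ζ⁻¹ := conj_zeta hp.pos hζ
        rw [hcz, inv_pow, inv_pow]
        have h2kh : 2 * (k * h) = k * p + k := by
          rw [show 2 * (k * h) = k * (2 * h) by ring, h2h]; ring
        have hzz : ζ ^ (2 * (k * h)) = ζ ^ k := by
          rw [h2kh, pow_add, mul_comm k p, pow_mul, hζ.pow_eq_one, one_pow, one_mul]
        refine eq_inv_of_mul_eq_one_left ?_
        rw [mul_comm (ζ ^ (k * h)) ((ζ ^ k)⁻¹), mul_assoc, ← pow_add, ← two_mul, hzz]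
        exact inv_mul_cancel₀ (pow_ne_zero _ hzne)
      rw [← mul_assoc, hpow]
  · -- bad case : α = -ζ ^ k , contradiction
    exfalso
    have hβp : (-α) ^ p = 1 := by
      rw [Odd.neg_pow hodd, hεm1, neg_neg]
    obtain ⟨k, hk, hkβ⟩ := hζ.eq_pow_of_pow_eq_one hβp
    have hαval : α = -ζ ^ k := by rw [hkβ, neg_neg]
    obtain ⟨y₁, hy₁, hEq₁⟩ := sub_conj_dvd hp.two_le hζ hcu_mem
    obtain ⟨y₂, hy₂, hEq₂⟩ := one_sub_pow_dvd ζ k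
    -- 2 * cu = (1 - ζ) * (y₁ + y₂ * conj cu)
    have hdvd2 : (2 : ℂ) * cu = (1 - ζ) * (y₁ + y₂ * (starRingEnd ℂ) cu) := by
      have hc : cu = -(ζ ^ k) * (starRingEnd ℂ) cu := by
        conv_lhs => rw [hkey]
        rw [hαval]
      linear_combination hEq₁ + (starRingEnd ℂ) cu * hEq₂ + hc
    have h2 : (2 : ℂ) = (1 - ζ) * ((y₁ + y₂ * (starRingEnd ℂ) cu) * cuinv) := by
      linear_combination cuinv * hdvd2 - 2 * huv
    -- transfer to R and apply the homomorphism to ZMod p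
    obtain ⟨φ, hφζ⟩ := exists_hom hp hζ
    have hw_mem : (y₁ + y₂ * (starRingEnd ℂ) cu) * cuinv ∈ Algebra.adjoin ℤ ({ζ} : Set ℂ) :=
      mul_mem (add_mem hy₁ (mul_mem hy₂ (conj_mem hp.pos hζ hcu_mem))) hcuinv_mem
    have hlam_mem : (1 : ℂ) - ζ ∈ Algebra.adjoin ℤ ({ζ} : Set ℂ) := sub_mem (one_mem _) (Algebra.self_mem_adjoin_singleton ℤ ζ)
    have hReq : (2 : Algebra.adjoin ℤ ({ζ} : Set ℂ)) = ⟨(1 : ℂ) - ζ, hlam_mem⟩ * ⟨_, hw_mem⟩ := by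
      ext; push_cast; exact h2
    have hφ2 : (2 : ZMod p) = 0 := by
      have h3 := congrArg φ hReq
      rw [map_mul] at h3
      have hφtwo : φ (2 : Algebra.adjoin ℤ ({ζ} : Set ℂ)) = 2 := by
        rw [show (2 : Algebra.adjoin ℤ ({ζ} : Set ℂ)) = 1 + 1 by norm_num, map_add, map_one]
        norm_num
      rw [hφtwo] at h3
      have hφlam : φ ⟨(1 : ℂ) - ζ, hlam_mem⟩ = 0 := by
        have hsub : (⟨(1 : ℂ) - ζ, hlam_mem⟩ : Algebra.adjoin ℤ ({ζ} : Set ℂ))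
            = 1 - ⟨ζ, Algebra.self_mem_adjoin_singleton ℤ ζ⟩ := by ext; push_cast; ring
        rw [hsub, map_sub, map_one, hφζ, sub_self]
      rw [hφlam, zero_mul] at h3
      exact h3
    have hp2 : (p : ℕ) ∣ 2 := by
      have : ((2 : ℕ) : ZMod p) = 0 := by exact_mod_cast hφ2
      exact (ZMod.natCast_eq_zero_iff _ _).1 this
    have hp2' : p = 2 := (Nat.prime_dvd_prime_iff_eq hp Nat.prime_two).1 hp2
    rw [hp2', Nat.odd_iff] at hodd
    norm_num at hodd
end
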